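/- Fix Θ ∈ (0, π). Then ϑ₁(r₁, r₂) + ϑ₂(r₁, r₂) → Θ as (r₁, r₂) → (0, 0) with both coordinates staying positive. -/

import Mathlib

/-- The inverse hyperbolic cosine: `arcosh x = log (x + √(x² − 1))` for `x ≥ 1`. -/
noncomputable def arcosh (x : ℝ) : ℝ := Real.log (x + Real.sqrt (x ^ 2 - 1))

/-- The hyperbolic distance between the centers of two hyperbolic disks of radii `r₁`, `r₂`
meeting at exterior intersection angle `Θ` (hyperbolic cosine law). -/
noncomputable def dist2 (Θ r₁ r₂ : ℝ) : ℝ :=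
  arcosh (Real.cosh r₁ * Real.cosh r₂ + Real.cos Θ * Real.sinh r₁ * Real.sinh r₂)

/-- The inner angle `ϑ₁` at the first center of the hyperbolic triangle with side
lengths `r₁`, `r₂`, `d` (hyperbolic law of cosines). -/
noncomputable def theta2₁ (Θ r₁ r₂ : ℝ) : ℝ :=
  Real.arccos ((Real.cosh r₁ * Real.cosh (dist2 Θ r₁ r₂) - Real.cosh r₂) /
    (Real.sinh r₁ * Real.sinh (dist2 Θ r₁ r₂)))

/-- The inner angle `ϑ₂` at the second center of the hyperbolic triangle with side
lengths `r₁`, `r₂`, `d` (hyperbolic law of cosines). -/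
noncomputable def theta2₂ (Θ r₁ r₂ : ℝ) : ℝ :=
  Real.arccos ((Real.cosh r₂ * Real.cosh (dist2 Θ r₁ r₂) - Real.cosh r₁) /
    (Real.sinh r₂ * Real.sinh (dist2 Θ r₁ r₂)))

lemma my_cosh_arcosh {x : ℝ} (hx : 1 ≤ x) : Real.cosh (arcosh x) = x := by
  have h1 : (0:ℝ) ≤ x ^ 2 - 1 := by nlinarith
  have hs : Real.sqrt (x ^ 2 - 1) ^ 2 = x ^ 2 - 1 := Real.sq_sqrt h1
  have hsn : 0 ≤ Real.sqrt (x ^ 2 - 1) := Real.sqrt_nonneg _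
  have hy : 0 < x + Real.sqrt (x ^ 2 - 1) := by nlinarith
  rw [arcosh, Real.cosh_eq, Real.exp_log hy, Real.exp_neg, Real.exp_log hy]
  field_simp
  linear_combination hs

lemma my_sinh_arcosh {x : ℝ} (hx : 1 ≤ x) : Real.sinh (arcosh x) = Real.sqrt (x ^ 2 - 1) := by
  have h1 : (0:ℝ) ≤ x ^ 2 - 1 := by nlinarith
  have hs : Real.sqrt (x ^ 2 - 1) ^ 2 = x ^ 2 - 1 := Real.sq_sqrt h1
  have hsn : 0 ≤ Real.sqrt (x ^ 2 - 1) := Real.sqrt_nonneg _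
  have hy : 0 < x + Real.sqrt (x ^ 2 - 1) := by nlinarith
  rw [arcosh, Real.sinh_eq, Real.exp_log hy, Real.exp_neg, Real.exp_log hy]
  field_simp
  nlinarith [hs]

open Real in
lemma key_aux (k s₁ s₂ c₁ c₂ S D : ℝ) (hs₁ : 0 < s₁) (hs₂ : 0 < s₂)
    (hc₁0 : 0 < c₁) (hc₂0 : 0 < c₂)
    (hc₁ : c₁ ^ 2 = s₁ ^ 2 + 1) (hc₂ : c₂ ^ 2 = s₂ ^ 2 + 1)
    (hk1 : -1 < k) (hk2 : k < 1)
    (hD : D = c₁ * c₂ + k * s₁ * s₂) (hD1 : 1 < D) (hS : 0 < S) (hSsq : S ^ 2 = D ^ 2 - 1) :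
    Real.arccos ((c₁ * D - c₂) / (s₁ * S)) + Real.arccos ((c₂ * D - c₁) / (s₂ * S))
      = Real.arccos (k + (1 - k ^ 2) * s₁ * s₂ / (D + 1)) := by
  subst hD
  have h1k : (0:ℝ) ≤ 1 - k ^ 2 := by nlinarith
  have ha2 : 1 - ((c₁ * (c₁ * c₂ + k * s₁ * s₂) - c₂) / (s₁ * S)) ^ 2
      = (1 - k ^ 2) * s₂ ^ 2 / S ^ 2 := by
    field_simp
    linear_combination ((s₁^2) * hSsq + ((-1)*s₁^2*s₂^2*k^2 + c₂^2 + (-2)*c₁*c₂*s₁*s₂*k + (-1)*c₁^2*c₂^2) * hc₁ + (s₁^2) * hc₂)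
  have hb2 : 1 - ((c₂ * (c₁ * c₂ + k * s₁ * s₂) - c₁) / (s₂ * S)) ^ 2
      = (1 - k ^ 2) * s₁ ^ 2 / S ^ 2 := by
    field_simp
    linear_combination ((s₂^2) * hSsq + ((-1) + (2)*c₂^2 + c₂^2*s₂^2 + (-1)*c₂^4) * hc₁ + ((1) + s₁^2 + (-1)*s₁^2*s₂^2*k^2 + (-1)*c₂^2 + (-1)*c₂^2*s₁^2 + (-2)*c₁*c₂*s₁*s₂*k) * hc₂)
  have ha2' : 0 ≤ 1 - ((c₁ * (c₁ * c₂ + k * s₁ * s₂) - c₂) / (s₁ * S)) ^ 2 := by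
    rw [ha2]; exact div_nonneg (mul_nonneg h1k (sq_nonneg _)) (sq_nonneg _)
  have hb2' : 0 ≤ 1 - ((c₂ * (c₁ * c₂ + k * s₁ * s₂) - c₁) / (s₂ * S)) ^ 2 := by
    rw [hb2]; exact div_nonneg (mul_nonneg h1k (sq_nonneg _)) (sq_nonneg _)
  have haI1 : -1 ≤ (c₁ * (c₁ * c₂ + k * s₁ * s₂) - c₂) / (s₁ * S) := by nlinarith [ha2']
  have haI2 : (c₁ * (c₁ * c₂ + k * s₁ * s₂) - c₂) / (s₁ * S) ≤ 1 := by nlinarith [ha2']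
  have hbI1 : -1 ≤ (c₂ * (c₁ * c₂ + k * s₁ * s₂) - c₁) / (s₂ * S) := by nlinarith [hb2']
  have hbI2 : (c₂ * (c₁ * c₂ + k * s₁ * s₂) - c₁) / (s₂ * S) ≤ 1 := by nlinarith [hb2']
  have hsina : Real.sin (Real.arccos ((c₁ * (c₁ * c₂ + k * s₁ * s₂) - c₂) / (s₁ * S)))
      = Real.sqrt (1 - k ^ 2) * s₂ / S := by
    rw [Real.sin_arccos, ha2,
      show (1 - k ^ 2) * s₂ ^ 2 / S ^ 2 = (Real.sqrt (1 - k ^ 2) * s₂ / S) ^ 2 by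
        rw [div_pow, mul_pow, Real.sq_sqrt h1k]]
    exact Real.sqrt_sq (by positivity)
  have hsinb : Real.sin (Real.arccos ((c₂ * (c₁ * c₂ + k * s₁ * s₂) - c₁) / (s₂ * S)))
      = Real.sqrt (1 - k ^ 2) * s₁ / S := by
    rw [Real.sin_arccos, hb2,
      show (1 - k ^ 2) * s₁ ^ 2 / S ^ 2 = (Real.sqrt (1 - k ^ 2) * s₁ / S) ^ 2 by
        rw [div_pow, mul_pow, Real.sq_sqrt h1k]]
    exact Real.sqrt_sq (by positivity)
  have hcos : Real.cos (Real.arccos ((c₁ * (c₁ * c₂ + k * s₁ * s₂) - c₂) / (s₁ * S))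
        + Real.arccos ((c₂ * (c₁ * c₂ + k * s₁ * s₂) - c₁) / (s₂ * S)))
      = k + (1 - k ^ 2) * s₁ * s₂ / (c₁ * c₂ + k * s₁ * s₂ + 1) := by
    rw [Real.cos_add, Real.cos_arccos haI1 haI2, Real.cos_arccos hbI1 hbI2, hsina, hsinb]
    rw [show Real.sqrt (1 - k ^ 2) * s₂ / S * (Real.sqrt (1 - k ^ 2) * s₁ / S)
        = (1 - k ^ 2) * s₁ * s₂ / S ^ 2 by
      rw [div_mul_div_comm,
        show Real.sqrt (1 - k ^ 2) * s₂ * (Real.sqrt (1 - k ^ 2) * s₁)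
          = Real.sqrt (1 - k ^ 2) ^ 2 * s₁ * s₂ by ring, Real.sq_sqrt h1k,
        show S * S = S ^ 2 by ring]]
    field_simp
    linear_combination (((-1)*s₁*s₂*k + (-1)*s₁^2*s₂^2 + (-1)*c₁*c₂*s₁*s₂*k) * hSsq + ((-1)*s₁*s₂*k + (-1)*s₁^2*s₂^2*k^2 + c₂^2*s₁*s₂*k + (-1)*c₂^2*s₁^2 + (-1)*c₂^2*s₁^2*s₂^2 + c₂^2*s₁^2*s₂^2*k^2 + c₂^4*s₁^2 + (-1)*c₁*c₂ + (-2)*c₁*c₂*s₁*s₂*k + c₁*c₂^3 + (2)*c₁*c₂^3*s₁*s₂*k + (-1)*c₁^2*c₂^2 + c₁^2*c₂^4) * hc₁ + (s₁^3*s₂*k + s₁^4*s₂^2*k^2 + c₂^2*s₁^2 + c₂^2*s₁^4 + c₁*c₂*s₁^2 + (2)*c₁*c₂*s₁^3*s₂*k) * hc₂)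
  have hab : 0 ≤ (c₁ * (c₁ * c₂ + k * s₁ * s₂) - c₂) / (s₁ * S)
      + (c₂ * (c₁ * c₂ + k * s₁ * s₂) - c₁) / (s₂ * S) := by
    rw [div_add_div _ _ (by positivity : s₁ * S ≠ 0) (by positivity : s₂ * S ≠ 0)]
    apply div_nonneg _ (by positivity)
    rw [show (c₁ * (c₁ * c₂ + k * s₁ * s₂) - c₂) * (s₂ * S)
        + s₁ * S * (c₂ * (c₁ * c₂ + k * s₁ * s₂) - c₁)
        = S * ((c₁ * s₂ + c₂ * s₁) * (1 + k) * (s₁ * s₂)) by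
      linear_combination S * ((c₂*s₂) * hc₁ + (c₁*s₁) * hc₂)]
    apply mul_nonneg hS.le
    apply mul_nonneg (mul_nonneg (by positivity) (by linarith)) (by positivity)
  have hsumle : Real.arccos ((c₁ * (c₁ * c₂ + k * s₁ * s₂) - c₂) / (s₁ * S))
      + Real.arccos ((c₂ * (c₁ * c₂ + k * s₁ * s₂) - c₁) / (s₂ * S)) ≤ Real.pi := by
    have hmono : Real.arcsin (-((c₂ * (c₁ * c₂ + k * s₁ * s₂) - c₁) / (s₂ * S)))
        ≤ Real.arcsin ((c₁ * (c₁ * c₂ + k * s₁ * s₂) - c₂) / (s₁ * S)) :=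
      Real.monotone_arcsin (by linarith)
    have e1 := Real.arccos_eq_pi_div_two_sub_arcsin
      ((c₁ * (c₁ * c₂ + k * s₁ * s₂) - c₂) / (s₁ * S))
    have e2 := Real.arccos_eq_pi_div_two_sub_arcsin
      (-((c₂ * (c₁ * c₂ + k * s₁ * s₂) - c₁) / (s₂ * S)))
    have e3 := Real.arccos_neg ((c₂ * (c₁ * c₂ + k * s₁ * s₂) - c₁) / (s₂ * S))
    linarith
  have hsum0 : 0 ≤ Real.arccos ((c₁ * (c₁ * c₂ + k * s₁ * s₂) - c₂) / (s₁ * S))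
      + Real.arccos ((c₂ * (c₁ * c₂ + k * s₁ * s₂) - c₁) / (s₂ * S)) :=
    add_nonneg (Real.arccos_nonneg _) (Real.arccos_nonneg _)
  rw [← hcos]
  exact (Real.arccos_cos hsum0 hsumle).symm

open Real in
lemma key_identity (Θ r₁ r₂ : ℝ) (hΘ : Θ ∈ Set.Ioo 0 Real.pi) (h1 : 0 < r₁) (h2 : 0 < r₂) :
    theta2₁ Θ r₁ r₂ + theta2₂ Θ r₁ r₂ =
      Real.arccos (Real.cos Θ + Real.sin Θ ^ 2 * Real.sinh r₁ * Real.sinh r₂ /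
        (Real.cosh r₁ * Real.cosh r₂ + Real.cos Θ * Real.sinh r₁ * Real.sinh r₂ + 1)) := by
  obtain ⟨hΘ0, hΘπ⟩ := hΘ
  have hs₁ : 0 < Real.sinh r₁ := by positivity
  have hs₂ : 0 < Real.sinh r₂ := by positivity
  have hsinΘ : 0 < Real.sin Θ := Real.sin_pos_of_pos_of_lt_pi hΘ0 hΘπ
  have hsk : Real.sin Θ ^ 2 = 1 - Real.cos Θ ^ 2 := by
    have := Real.sin_sq_add_cos_sq Θ; linarith
  have hk1 : -1 < Real.cos Θ := by
    nlinarith [Real.neg_one_le_cos Θ]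
  have hk2 : Real.cos Θ < 1 := by
    nlinarith [Real.cos_le_one Θ]
  have hD1 : 1 < Real.cosh r₁ * Real.cosh r₂ + Real.cos Θ * Real.sinh r₁ * Real.sinh r₂ := by
    have h := Real.one_le_cosh (r₁ - r₂)
    rw [Real.cosh_sub] at h
    nlinarith [mul_pos (mul_pos (by linarith : (0:ℝ) < Real.cos Θ + 1) hs₁) hs₂]
  have hcd : Real.cosh (dist2 Θ r₁ r₂)
      = Real.cosh r₁ * Real.cosh r₂ + Real.cos Θ * Real.sinh r₁ * Real.sinh r₂ := by
    rw [dist2]; exact my_cosh_arcosh hD1.le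
  have hsd : Real.sinh (dist2 Θ r₁ r₂)
      = Real.sqrt ((Real.cosh r₁ * Real.cosh r₂ + Real.cos Θ * Real.sinh r₁ * Real.sinh r₂) ^ 2
        - 1) := by
    rw [dist2]; exact my_sinh_arcosh hD1.le
  have hS : 0 < Real.sqrt ((Real.cosh r₁ * Real.cosh r₂
      + Real.cos Θ * Real.sinh r₁ * Real.sinh r₂) ^ 2 - 1) :=
    Real.sqrt_pos.mpr (by nlinarith)
  have hSsq : (Real.sqrt ((Real.cosh r₁ * Real.cosh r₂
      + Real.cos Θ * Real.sinh r₁ * Real.sinh r₂) ^ 2 - 1)) ^ 2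
      = (Real.cosh r₁ * Real.cosh r₂ + Real.cos Θ * Real.sinh r₁ * Real.sinh r₂) ^ 2 - 1 :=
    Real.sq_sqrt (by nlinarith)
  rw [theta2₁, theta2₂, hcd, hsd, hsk]
  exact key_aux (Real.cos Θ) (Real.sinh r₁) (Real.sinh r₂) (Real.cosh r₁) (Real.cosh r₂)
    _ _ hs₁ hs₂ (Real.cosh_pos r₁) (Real.cosh_pos r₂) (Real.cosh_sq r₁) (Real.cosh_sq r₂)
    hk1 hk2 rfl hD1 hS hSsq

open Filter Topology in
theorem two_circle_angle_sum_tendsto_Theta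
    (Θ : ℝ) (hΘ : Θ ∈ Set.Ioo 0 Real.pi) :
    Tendsto (fun p : ℝ × ℝ => theta2₁ Θ p.1 p.2 + theta2₂ Θ p.1 p.2)
      (𝓝[{p : ℝ × ℝ | 0 < p.1 ∧ 0 < p.2}] (0, 0)) (𝓝 Θ) := by
  have hca : ContinuousAt (fun p : ℝ × ℝ => Real.cos Θ +
      Real.sin Θ ^ 2 * Real.sinh p.1 * Real.sinh p.2 /
        (Real.cosh p.1 * Real.cosh p.2 + Real.cos Θ * Real.sinh p.1 * Real.sinh p.2 + 1))
      (0, 0) := by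
    apply ContinuousAt.add continuousAt_const
    apply ContinuousAt.div
    · fun_prop
    · fun_prop
    · simp
  have hcont : Tendsto (fun p : ℝ × ℝ => Real.arccos (Real.cos Θ +
      Real.sin Θ ^ 2 * Real.sinh p.1 * Real.sinh p.2 /
        (Real.cosh p.1 * Real.cosh p.2 + Real.cos Θ * Real.sinh p.1 * Real.sinh p.2 + 1)))
      (𝓝 ((0:ℝ), (0:ℝ))) (𝓝 Θ) := by
    have h := (Real.continuous_arccos.continuousAt.comp hca).tendsto
    simp only [Function.comp_def] at h
    convert h using 2
    simp [Real.arccos_cos hΘ.1.le hΘ.2.le]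
  refine Tendsto.congr' ?_ (hcont.mono_left nhdsWithin_le_nhds)
  filter_upwards [self_mem_nhdsWithin] with p hp
  exact (key_identity Θ p.1 p.2 ⟨hΘ.1, hΘ.2⟩ hp.1 hp.2).symm
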